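/- A k-spread of F_q^n (a partition of the nonzero vectors into k-dimensional subspaces meeting only in 0, covering every 1-dimensional subspace exactly once) exists if and only if k divides n, where 1 ≤ k ≤ n. -/

import Mathlib

open Module

/-- The subspace distance between two subspaces. -/
noncomputable def dS {K V : Type*} [Field K] [AddCommGroup V] [Module K V]
    (U W : Submodule K V) : ℕ :=
  finrank K ↥(U ⊔ W) - finrank K ↥(U ⊓ W)

/-- The injection distance between two subspaces. -/
noncomputable def dI {K V : Type*} [Field K] [AddCommGroup V] [Module K V]
    (U W : Submodule K V) : ℕ :=
  max (finrank K ↥U) (finrank K ↥W) - finrank K ↥(U ⊓ W)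

/-- A `k`-spread of `V`: a set of `k`-dimensional subspaces such that every nonzero
vector lies in exactly one member. -/
def IsSpread {K V : Type*} [Field K] [AddCommGroup V] [Module K V]
    (S : Set (Submodule K V)) (k : ℕ) : Prop :=
  (∀ U ∈ S, finrank K ↥U = k) ∧ ∀ v : V, v ≠ 0 → ∃! U, U ∈ S ∧ v ∈ U

/-- Numeric lemma: if `q ^ k - 1 ∣ q ^ n - 1` with `q ≥ 2`, `k ≥ 1`, then `k ∣ n`. -/
lemma spread_aux_dvd {q k n : ℕ} (hq : 2 ≤ q) (hk : 1 ≤ k)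
    (h : q ^ k - 1 ∣ q ^ n - 1) : k ∣ n := by
  set r := n % k with hr
  set s := n / k with hs
  have hkn : k * s + r = n := Nat.div_add_mod n k
  have hks : q ^ k - 1 ∣ q ^ (k * s) - 1 := by
    have := Nat.sub_dvd_pow_sub_pow (q ^ k) 1 s
    simpa [← pow_mul] using this
  have h2 : 1 ≤ q ^ (k * s) := Nat.one_le_pow _ _ (by omega)
  have h3 : q ^ (k * s) ≤ q ^ n := Nat.pow_le_pow_right (by omega) (by omega)
  have h1 : q ^ k - 1 ∣ q ^ n - q ^ (k * s) := by
    have heq : q ^ n - q ^ (k * s) = (q ^ n - 1) - (q ^ (k * s) - 1) := by omega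
    rw [heq]
    exact Nat.dvd_sub h hks
  have hmul : q ^ n - q ^ (k * s) = q ^ (k * s) * (q ^ r - 1) := by
    rw [Nat.mul_sub, mul_one, ← pow_add, hkn]
  have hcop : Nat.Coprime (q ^ k - 1) (q ^ (k * s)) := by
    have hqk : 1 ≤ q ^ k := Nat.one_le_pow _ _ (by omega)
    have hc1 : Nat.Coprime (q ^ k - 1) (q ^ k) := by
      have heq : q ^ k = (q ^ k - 1) + 1 := by omega
      rw [heq]
      exact Nat.coprime_comm.mp (Nat.coprime_self_add_left.mpr (Nat.coprime_one_left _))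
    have hc2 : Nat.Coprime (q ^ k - 1) q :=
      Nat.Coprime.coprime_dvd_right (dvd_pow_self q (by omega)) hc1
    exact hc2.pow_right _
  have h4 : q ^ k - 1 ∣ q ^ r - 1 := hcop.dvd_of_dvd_mul_left (hmul ▸ h1)
  have hrlt : r < k := Nat.mod_lt n (by omega)
  have h5 : q ^ r - 1 = 0 := by
    by_contra h5
    have hle := Nat.le_of_dvd (Nat.pos_of_ne_zero h5) h4
    have hlt : q ^ r < q ^ k := Nat.pow_lt_pow_right (by omega) hrlt
    omega
  have hr0 : r = 0 := by
    by_contra hr0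
    have := Nat.le_self_pow hr0 q
    omega
  exact Nat.dvd_of_mod_eq_zero hr0

instance spread_finite_submodule {K V : Type*} [Field K] [AddCommGroup V] [Module K V]
    [Finite V] : Finite (Submodule K V) :=
  Finite.of_injective (fun U => (U : Set V)) SetLike.coe_injective

/-- Counting: a `k`-spread forces `q ^ k - 1 ∣ q ^ (dim V) - 1`. -/
lemma spread_card_dvd {K V : Type*} [Field K] [Fintype K] [AddCommGroup V] [Module K V]
    [Fintype V] {S : Set (Submodule K V)} {k : ℕ} (hS : IsSpread S k) :
    Fintype.card K ^ k - 1 ∣ Fintype.card V - 1 := by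
  classical
  haveI : Fintype S := Fintype.ofFinite S
  let N := {v : V // v ≠ 0}
  have hex : ∀ v : N, ∃ U : S, (v : V) ∈ (U : Submodule K V) := by
    intro v
    obtain ⟨U, ⟨hU, hvU⟩, -⟩ := hS.2 v v.2
    exact ⟨⟨U, hU⟩, hvU⟩
  choose φ hφ using hex
  have hφunique : ∀ (v : N) (U : S), (v : V) ∈ (U : Submodule K V) → φ v = U := by
    intro v U hvU
    obtain ⟨U₀, hU₀, huniq⟩ := hS.2 v v.2
    have h1 : ((φ v : Submodule K V)) = U₀ := huniq _ ⟨(φ v).2, hφ v⟩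
    have h2 : ((U : Submodule K V)) = U₀ := huniq _ ⟨U.2, hvU⟩
    exact Subtype.ext (h1.trans h2.symm)
  have hcard : Fintype.card N = ∑ U : S, Fintype.card {v : N // φ v = U} := by
    rw [← Fintype.card_sigma]
    exact (Fintype.card_congr (Equiv.sigmaFiberEquiv φ)).symm
  have hfiber : ∀ U : S, Fintype.card {v : N // φ v = U} = Fintype.card K ^ k - 1 := by
    intro U
    have hme : {v : N // φ v = U} ≃ {w : (U : Submodule K V) // w ≠ 0} :=
      { toFun := fun v =>
          ⟨⟨(v.1 : V), by have h := hφ v.1; rw [v.2] at h; exact h⟩, by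
            intro hc
            exact v.1.2 (by simpa using congrArg Subtype.val hc)⟩
        invFun := fun w =>
          ⟨⟨(w.1 : V), by
            intro hc
            exact w.2 (Subtype.ext hc)⟩, hφunique _ U w.1.2⟩
        left_inv := fun v => Subtype.ext (Subtype.ext rfl)
        right_inv := fun w => Subtype.ext (Subtype.ext rfl) }
    rw [Fintype.card_congr hme]
    have hUcard : Fintype.card (U : Submodule K V) = Fintype.card K ^ k := by
      rw [card_eq_pow_finrank (K := K), hS.1 U.1 U.2]
    have h0 : Fintype.card {w : (U : Submodule K V) // w = 0} = 1 :=
      Fintype.card_subtype_eq (0 : (U : Submodule K V))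
    have := Fintype.card_subtype_compl (fun w : (U : Submodule K V) => w = 0)
    rw [h0, hUcard] at this
    exact this
  have hN : Fintype.card N = Fintype.card V - 1 := by
    have h0 : Fintype.card {v : V // v = 0} = 1 := Fintype.card_subtype_eq (0 : V)
    have := Fintype.card_subtype_compl (fun v : V => v = 0)
    rw [h0] at this
    exact this
  have : Fintype.card V - 1 = Fintype.card S * (Fintype.card K ^ k - 1) := by
    rw [← hN, hcard]
    simp [hfiber, Finset.sum_const, Finset.card_univ, mul_comm]
  exact Dvd.intro _ (by rw [this, mul_comm])

/-- Transporting a spread along a linear equivalence. -/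
lemma isSpread_map {K V₁ V₂ : Type*} [Field K] [AddCommGroup V₁] [Module K V₁]
    [AddCommGroup V₂] [Module K V₂] (e : V₁ ≃ₗ[K] V₂) {S : Set (Submodule K V₁)} {k : ℕ}
    (h : IsSpread S k) :
    IsSpread ((fun U => Submodule.map (e : V₁ →ₗ[K] V₂) U) '' S) k := by
  constructor
  · rintro U ⟨U₀, hU₀, rfl⟩
    rw [LinearEquiv.finrank_map_eq]
    exact h.1 U₀ hU₀
  · intro w hw
    have hv : e.symm w ≠ 0 := by
      intro hc
      apply hw
      have := congrArg e hc
      simpa using this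
    obtain ⟨U₀, ⟨hU₀S, hU₀mem⟩, huniq⟩ := h.2 (e.symm w) hv
    refine ⟨Submodule.map (e : V₁ →ₗ[K] V₂) U₀, ⟨⟨U₀, hU₀S, rfl⟩, ?_⟩, ?_⟩
    · rw [Submodule.mem_map_equiv]
      exact hU₀mem
    · rintro U' ⟨⟨U₁, hU₁S, rfl⟩, hwU₁⟩
      rw [Submodule.mem_map_equiv] at hwU₁
      rw [huniq U₁ ⟨hU₁S, hwU₁⟩]

/-- The spread of one-dimensional `L`-subspaces, viewed over the subfield `K`. -/
lemma isSpread_restrictScalars {K L V : Type*} [Field K] [Field L] [AddCommGroup V]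
    [Module L V] [Module K V] [Algebra K L] [IsScalarTower K L V] {k : ℕ}
    (hfin : finrank K L = k) :
    IsSpread {U : Submodule K V | ∃ v : V, v ≠ 0 ∧
      U = Submodule.restrictScalars K (Submodule.span L {v})} k := by
  constructor
  · rintro U ⟨v, hv, rfl⟩
    have e2 : ↥(Submodule.restrictScalars K (Submodule.span L {v})) ≃ₗ[K]
        ↥(Submodule.span L {v}) :=
      (Submodule.restrictScalarsEquiv K L V (Submodule.span L {v})).restrictScalars K
    rw [e2.finrank_eq]
    have h1 : finrank K L * finrank L ↥(Submodule.span L {v}) =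
        finrank K ↥(Submodule.span L {v}) := Module.finrank_mul_finrank K L _
    rw [← h1, finrank_span_singleton hv, hfin, mul_one]
  · intro v hv
    refine ⟨Submodule.restrictScalars K (Submodule.span L {v}), ⟨⟨v, hv, rfl⟩, ?_⟩, ?_⟩
    · exact Submodule.mem_span_singleton_self v
    · rintro U ⟨⟨w, hw, rfl⟩, hvw⟩
      rw [Submodule.restrictScalars_mem] at hvw
      obtain ⟨c, rfl⟩ := Submodule.mem_span_singleton.mp hvw
      have hc : c ≠ 0 := by rintro rfl; simp at hv
      rw [Submodule.span_singleton_smul_eq (IsUnit.mk0 c hc) w]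

open Polynomial in
/-- Construction of a `k`-spread of `K ^ n` when `k ∣ n`. -/
lemma exists_spread_of_dvd {K : Type*} [Field K] [Fintype K] {n k : ℕ}
    (hk1 : 1 ≤ k) (hdvd : k ∣ n) :
    ∃ S : Set (Submodule K (Fin n → K)), IsSpread S k := by
  classical
  obtain ⟨p, hc⟩ := CharP.exists K
  haveI : CharP K p := hc
  haveI hp : Fact p.Prime := ⟨CharP.char_is_prime K p⟩
  obtain ⟨d, -, hcard⟩ := FiniteField.card K p
  letI : Algebra (ZMod p) K := ZMod.algebra K p
  set L := GaloisField p ((d : ℕ) * k) with hLdef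
  haveI : Fintype L := Fintype.ofFinite L
  have hdk : (d : ℕ) * k ≠ 0 := Nat.mul_ne_zero d.pos.ne' (by omega)
  have hcardL : Fintype.card L = p ^ ((d : ℕ) * k) := by
    rw [← Nat.card_eq_fintype_card]
    exact GaloisField.card p _ hdk
  have hppos : 1 < p := hp.out.one_lt
  have hX : ∀ m : ℕ, 1 ≤ m → (X ^ m - X : (ZMod p)[X]) = X * (X ^ (m - 1) - 1) := by
    intro m hm
    have hm' : m - 1 + 1 = m := by omega
    calc (X ^ m - X : (ZMod p)[X]) = X ^ (m - 1 + 1) - X := by rw [hm']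
      _ = X * (X ^ (m - 1) - 1) := by rw [pow_succ]; ring
  have hsplit : Splits ((X ^ p ^ (d : ℕ) - X : (ZMod p)[X]).map (algebraMap (ZMod p) L)) := by
    have hbig : Splits ((X ^ p ^ ((d : ℕ) * k) - X : (ZMod p)[X]).map (algebraMap (ZMod p) L)) :=
      SplittingField.splits _
    refine Splits.of_dvd hbig
      (Polynomial.map_ne_zero (FiniteField.X_pow_card_pow_sub_X_ne_zero (ZMod p) hdk hppos))
      (Polynomial.map_dvd _ ?_)
    set a := p ^ (d : ℕ) with ha
    have ha1 : 1 ≤ a := Nat.one_le_pow _ _ (by omega)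
    have hak : 1 ≤ a ^ k := Nat.one_le_pow _ _ (by omega)
    obtain ⟨t, ht⟩ := Nat.sub_dvd_pow_sub_pow a 1 k
    have hdvd1 : (X ^ (a - 1) - 1 : (ZMod p)[X]) ∣ X ^ (a ^ k - 1) - 1 := by
      have hpow : (X : (ZMod p)[X]) ^ (a ^ k - 1) = (X ^ (a - 1)) ^ t := by
        have h' : a ^ k - 1 = (a - 1) * t := by simpa using ht
        rw [h', pow_mul]
      rw [hpow]
      simpa using sub_dvd_pow_sub_pow ((X : (ZMod p)[X]) ^ (a - 1)) 1 t
    have hbigeq : (X ^ p ^ ((d : ℕ) * k) - X : (ZMod p)[X]) = X * (X ^ (a ^ k - 1) - 1) := by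
      rw [← hX (a ^ k) hak, ha, ← pow_mul]
    rw [hbigeq, hX a ha1]
    exact mul_dvd_mul_left _ hdvd1
  let e1 : K ≃ₐ[ZMod p] GaloisField p (d : ℕ) :=
    GaloisField.algEquivGaloisFieldOfFintype p (d : ℕ) hcard
  let f2 : GaloisField p (d : ℕ) →ₐ[ZMod p] L := Polynomial.SplittingField.lift _ hsplit
  letI : Algebra K L := RingHom.toAlgebra (f2.toRingHom.comp (e1 : K →+* GaloisField p (d : ℕ)))
  haveI : Module.Finite K L := Module.Finite.of_finite
  have hfinKL : finrank K L = k := by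
    have h1 : Fintype.card L = Fintype.card K ^ finrank K L :=
      card_eq_pow_finrank (K := K) (V := L)
    rw [hcardL, hcard, ← pow_mul] at h1
    have h2 := Nat.pow_right_injective hp.out.two_le h1
    exact (Nat.eq_of_mul_eq_mul_left d.pos h2).symm
  set m := n / k with hm
  haveI : IsScalarTower K L (Fin m → L) := by infer_instance
  have hfinV' : finrank K (Fin m → L) = n := by
    have h1 : finrank K L * finrank L (Fin m → L) = finrank K (Fin m → L) :=
      Module.finrank_mul_finrank K L (Fin m → L)
    rw [hfinKL, Module.finrank_pi, Fintype.card_fin] at h1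
    rw [← h1, Nat.mul_div_cancel' hdvd]
  haveI : Module.Finite K (Fin m → L) := Module.Finite.of_finite
  let e : (Fin m → L) ≃ₗ[K] (Fin n → K) :=
    LinearEquiv.ofFinrankEq _ _ (by rw [hfinV', Module.finrank_fin_fun])
  exact ⟨_, isSpread_map e (isSpread_restrictScalars hfinKL)⟩

/-- A `k`-spread of `F_q^n` exists if and only if `k` divides `n`. -/
theorem exists_spread_iff_dvd {K : Type*} [Field K] [Fintype K] {n k : ℕ}
    (hk1 : 1 ≤ k) (hkn : k ≤ n) :
    (∃ S : Set (Submodule K (Fin n → K)), IsSpread S k) ↔ k ∣ n := by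
  constructor
  · rintro ⟨S, hS⟩
    have hq : 2 ≤ Fintype.card K := Fintype.one_lt_card
    have hd := spread_card_dvd hS
    have hcard : Fintype.card (Fin n → K) = Fintype.card K ^ n := by
      simp [Fintype.card_fun]
    rw [hcard] at hd
    exact spread_aux_dvd hq hk1 hd
  · exact fun h => exists_spread_of_dvd hk1 h
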